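/- Let f_i (i ∈ ℕ) and f be quasi-concave functions on ℝ^N such that f_i increases pointwise to f on ℝ^N as i → ∞. Then for all t > 0, except for at most countably many values of t, the sets L_t(f_i) converge to L_t(f) in the Hausdorff sense, i.e. the Hausdorff (extended) distance between L_t(f_i) and L_t(f) tends to 0 as i → ∞. -/

import Mathlib

open Filter Topology MeasureTheory

noncomputable section

/-- A function `f : ℝ^N → ℝ` is quasi-concave if it is nonnegative and all its
superlevel sets `{x | t ≤ f x}` for `t > 0` are empty or compact and convex. -/
def QuasiConcave {N : ℕ} (f : EuclideanSpace ℝ (Fin N) → ℝ) : Prop :=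
  (∀ x, 0 ≤ f x) ∧
  ∀ t : ℝ, 0 < t →
    {x | t ≤ f x} = ∅ ∨ (IsCompact {x | t ≤ f x} ∧ Convex ℝ {x | t ≤ f x})

/-- If a sequence of quasi-concave functions increases pointwise to a quasi-concave `f`,
then for all `t > 0` outside an at most countable set, the superlevel sets
`L_t(f_i)` converge to `L_t(f)` in the Hausdorff (extended) distance. -/
theorem quasiConcave_increasing_level_sets_converge {N : ℕ}
    (fi : ℕ → EuclideanSpace ℝ (Fin N) → ℝ) (f : EuclideanSpace ℝ (Fin N) → ℝ)
    (hfi : ∀ i, QuasiConcave (fi i)) (hf : QuasiConcave f)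
    (hmono : Monotone fi)
    (hconv : ∀ x, Tendsto (fun i => fi i x) atTop (𝓝 (f x))) :
    ∃ T : Set ℝ, T.Countable ∧
      ∀ t : ℝ, 0 < t → t ∉ T →
        Tendsto (fun i => EMetric.hausdorffEdist {x | t ≤ fi i x} {x | t ≤ f x})
          atTop (𝓝 0) := by
  classical
  -- exceptional set: levels where the level set is not contained in the
  -- closure of the strict superlevel set
  set T : Set ℝ :=
    {t : ℝ | 0 < t ∧ ∃ x, f x = t ∧ x ∉ closure {y | t < f y}} with hT
  refine ⟨T, ?_, ?_⟩
  · -- countability of T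
    obtain ⟨D, hDc, hDd⟩ :=
      TopologicalSpace.exists_countable_dense (EuclideanSpace ℝ (Fin N))
    -- associate to each t ∈ T a ball with center in D and rational radius
    set Q : ℝ → (EuclideanSpace ℝ (Fin N)) × ℚ → Prop := fun t p =>
      (∃ x, f x = t ∧ x ∈ Metric.ball p.1 (p.2 : ℝ)) ∧
        ∀ y ∈ Metric.ball p.1 (p.2 : ℝ), ¬ t < f y with hQ
    have hsub : T ⊆ ⋃ p ∈ D ×ˢ (Set.univ : Set ℚ), {t | Q t p} := by
      rintro t ⟨-, x, hfx, hx⟩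
      rw [Metric.mem_closure_iff] at hx
      push_neg at hx
      obtain ⟨ε, hε, hx⟩ := hx
      obtain ⟨d, hd, hdist⟩ := hDd.exists_dist_lt x (by positivity : (0:ℝ) < ε / 4)
      obtain ⟨ρ, hρ1, hρ2⟩ := exists_rat_btwn (by linarith : ε / 4 < ε / 2)
      refine Set.mem_biUnion (Set.mk_mem_prod hd (Set.mem_univ ρ)) ?_
      constructor
      · refine ⟨x, hfx, ?_⟩
        rw [Metric.mem_ball, dist_comm] at *
        linarith
      · intro y hy hlt
        have := hx y hlt
        rw [Metric.mem_ball] at hy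
        have : dist x y ≤ dist x d + dist d y := dist_triangle x d y
        rw [dist_comm d y] at this
        have := hx y hlt
        linarith
    refine Set.Countable.mono hsub ?_
    refine Set.Countable.biUnion (hDc.prod (Set.countable_univ)) ?_
    intro p _
    -- each such set of levels is a subsingleton
    apply Set.Subsingleton.countable
    intro t1 h1 t2 h2
    by_contra hne
    rcases lt_or_gt_of_ne hne with h | h
    · obtain ⟨x, hfx, hx⟩ := h2.1
      exact h1.2 x hx (by rw [hfx]; exact h)
    · obtain ⟨x, hfx, hx⟩ := h1.1
      exact h2.2 x hx (by rw [hfx]; exact h)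
  · -- convergence off T
    intro t ht htT
    have hle : ∀ i x, fi i x ≤ f x := fun i x =>
      Monotone.ge_of_tendsto (fun a b hab => hmono hab x) (hconv x) i
    have hsub : ∀ i, {x | t ≤ fi i x} ⊆ {x | t ≤ f x} := fun i x hx =>
      le_trans hx (hle i x)
    rcases hf.2 t ht with hL | ⟨hLc, -⟩
    · -- the limit level set is empty, so all level sets are empty
      have h0 : ∀ i, EMetric.hausdorffEdist {x | t ≤ fi i x} {x | t ≤ f x} = 0 := by
        intro i
        have : {x | t ≤ fi i x} = (∅ : Set (EuclideanSpace ℝ (Fin N))) :=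
          Set.subset_eq_empty (hL ▸ hsub i) rfl
        rw [this, hL]; exact EMetric.hausdorffEdist_self
      simp only [h0]
      exact tendsto_const_nhds
    · -- the limit level set L is compact and nonempty case handled uniformly
      set L : Set (EuclideanSpace ℝ (Fin N)) := {x | t ≤ f x} with hLdef
      -- every point of L is in the closure of the strict superlevel set
      have hcl : ∀ x ∈ L, x ∈ closure {y | t < f y} := by
        intro x hx
        rcases eq_or_lt_of_le (show t ≤ f x from hx) with heq | hlt
        · by_contra hc
          exact htT ⟨ht, x, heq.symm, hc⟩
        · exact subset_closure hlt
      rw [ENNReal.tendsto_atTop_zero]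
      intro ε hε
      -- pick a positive real r with ofReal r ≤ ε
      obtain ⟨r, hr, hrε⟩ : ∃ r : ℝ, 0 < r ∧ ENNReal.ofReal r ≤ ε := by
        rcases eq_or_ne ε ⊤ with h | h
        · exact ⟨1, one_pos, h ▸ le_top⟩
        · exact ⟨ε.toReal, ENNReal.toReal_pos hε.ne' h,
            le_of_eq (ENNReal.ofReal_toReal h)⟩
      -- for each x in L, find a nearby point eventually in the approximating sets
      have key : ∀ x ∈ L, ∃ y, ∃ M : ℕ, dist x y < r / 2 ∧
          ∀ i ≥ M, t ≤ fi i y := by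
        intro x hx
        obtain ⟨y, hyS, hyd⟩ :=
          Metric.mem_closure_iff.1 (hcl x hx) (r / 2) (by positivity)
        have hev : ∀ᶠ i in atTop, t < fi i y :=
          (hconv y).eventually (eventually_gt_nhds hyS)
        obtain ⟨M, hM⟩ := eventually_atTop.1 hev
        exact ⟨y, M, hyd, fun i hi => (hM i hi).le⟩
      choose! y M hyd hM using key
      -- compactness: finitely many centers suffice
      have hcov : L ⊆ ⋃ x ∈ L, Metric.ball x (r / 2) := fun x hx =>
        Set.mem_biUnion hx (Metric.mem_ball_self (by positivity))
      obtain ⟨s, hsL, hsfin, hscov⟩ :=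
        hLc.elim_finite_subcover_image (fun x _ => Metric.isOpen_ball) hcov
      set Nbd : ℕ := hsfin.toFinset.sup (fun x => M x) with hNbd
      refine ⟨Nbd, fun i hi => ?_⟩
      refine le_trans (EMetric.hausdorffEdist_le_of_mem_edist ?_ ?_) hrε
      · -- points of the approximating set are in L
        intro x hx
        exact ⟨x, hsub i hx, by simp⟩
      · -- points of L are close to the approximating set
        intro x hx
        obtain ⟨c, hcs, hxc⟩ := Set.mem_iUnion₂.1 (hscov hx)
        have hcL : c ∈ L := hsL hcs
        have hMc : M c ≤ Nbd := Finset.le_sup (hsfin.mem_toFinset.2 hcs)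
        refine ⟨y c, hM c hcL i (le_trans hMc hi), ?_⟩
        rw [edist_le_ofReal hr.le]
        have h1 : dist x (y c) ≤ dist x c + dist c (y c) := dist_triangle _ _ _
        have h2 : dist x c < r / 2 := Metric.mem_ball.1 hxc
        have h3 : dist c (y c) < r / 2 := hyd c hcL
        linarith

end
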